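/- Let n ≥ 1 and let k_2, k_3, ..., k_{l_0} be integers with 0 ≤ k_l ≤ n−1 for each l and Σ_{l=2}^{l_0} k_l ≥ n. Then Σ_{l=2}^{l_0} Σ_{j=0}^{k_l − 1} (n − j) ≥ n(n+1)/2, where for k_l = 0 the inner sum is understood to be 0. -/

import Mathlib

lemma f_subadd (n a b : ℕ) :
    ∑ j ∈ Finset.range (a + b), (n - j) ≤
      (∑ j ∈ Finset.range a, (n - j)) + ∑ j ∈ Finset.range b, (n - j) := by
  rw [Finset.sum_range_add]
  gcongr with j _
  omega

lemma f_mono (n : ℕ) : Monotone (fun m => ∑ j ∈ Finset.range m, (n - j)) := by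
  intro a b hab
  exact Finset.sum_le_sum_of_subset (Finset.range_subset_range.2 hab)

lemma sum_f_ge (n : ℕ) (S : Finset ℕ) (k : ℕ → ℕ) :
    ∑ j ∈ Finset.range (∑ l ∈ S, k l), (n - j) ≤
      ∑ l ∈ S, ∑ j ∈ Finset.range (k l), (n - j) := by
  induction S using Finset.induction with
  | empty => simp
  | insert a s h ih =>
    rw [Finset.sum_insert h, Finset.sum_insert h]
    calc _ ≤ _ := f_subadd n _ _
    _ ≤ _ := by gcongr

lemma f_n (n : ℕ) : ∑ j ∈ Finset.range n, (n - j) = n * (n + 1) / 2 := by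
  rw [← Finset.sum_range_reflect]
  have : ∀ j ∈ Finset.range n, n - (n - 1 - j) = j + 1 := by
    intro j hj; simp only [Finset.mem_range] at hj; omega
  rw [Finset.sum_congr rfl this]
  have h2 := Finset.sum_range_id_mul_two (n + 1)
  rw [Finset.sum_range_succ'] at h2
  simp only [Nat.add_sub_cancel, mul_comm (n + 1) n] at h2
  omega

/-- If `n ≥ 1` and `k_2,...,k_{l_0}` are integers with `0 ≤ k_l ≤ n−1` for every `l`
and `∑_{l=2}^{l_0} k_l ≥ n`, then
`∑_{l=2}^{l_0} ∑_{j=0}^{k_l−1} (n−j) ≥ n(n+1)/2`,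
the inner sum being `0` when `k_l = 0`. -/
theorem double_sum_ge (n l₀ : ℕ) (hn : 1 ≤ n) (k : ℕ → ℕ)
    (hk : ∀ l, 2 ≤ l → l ≤ l₀ → k l ≤ n - 1)
    (hsum : n ≤ ∑ l ∈ Finset.Icc 2 l₀, k l) :
    n * (n + 1) / 2 ≤ ∑ l ∈ Finset.Icc 2 l₀, ∑ j ∈ Finset.range (k l), (n - j) := by
  calc n * (n + 1) / 2 = ∑ j ∈ Finset.range n, (n - j) := (f_n n).symm
    _ ≤ ∑ j ∈ Finset.range (∑ l ∈ Finset.Icc 2 l₀, k l), (n - j) := f_mono n hsum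
    _ ≤ _ := sum_f_ge n _ k
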